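/- If A = C·U·P with C in column echelon form having exactly r nonzero columns, U unit upper triangular, P a permutation matrix, then rank(A) = r. -/

import Mathlib

open Matrix

/-- If `A = C·U·P` with `C` in column echelon form having exactly `r` nonzero
columns, `U` unit upper triangular and `P` a permutation matrix, then
`rank A = r`. -/
theorem cup_stmt11 {K : Type*} [Field K] {m n r : ℕ} (hr : r ≤ n)
    (A C : Matrix (Fin m) (Fin n) K) (U P : Matrix (Fin n) (Fin n) K)
    (piv : Fin r → Fin m) (hpiv : StrictMono piv)
    (hCpiv : ∀ j : Fin r, C (piv j) (Fin.castLE hr j) ≠ 0)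
    (hCabove : ∀ j : Fin r, ∀ i : Fin m,
        (i : ℕ) < (piv j : ℕ) → C i (Fin.castLE hr j) = 0)
    (hCzero : ∀ c : Fin n, r ≤ (c : ℕ) → ∀ i : Fin m, C i c = 0)
    (hUdiag : ∀ i : Fin n, U i i = 1)
    (hUtri : ∀ i j : Fin n, (j : ℕ) < (i : ℕ) → U i j = 0)
    (σ : Equiv.Perm (Fin n)) (hP : P = σ.permMatrix K)
    (hA : A = C * U * P) :
    A.rank = r := by
  have hUdet : IsUnit U.det := by
    have : U.BlockTriangular id := fun i j h => hUtri i j h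
    rw [Matrix.det_of_upperTriangular this]
    simp [hUdiag]
  have hPdet : IsUnit P.det := by
    rw [hP, Matrix.det_permutation]
    rcases Int.units_eq_one_or σ.sign with h | h <;> simp [h]
  rw [hA, Matrix.rank_mul_eq_left_of_isUnit_det _ _ hPdet,
    Matrix.rank_mul_eq_left_of_isUnit_det _ _ hUdet]
  -- Now show rank C = r
  set v : Fin r → (Fin m → K) := fun j => Cᵀ (Fin.castLE hr j) with hv
  have hli : LinearIndependent K v := by
    rw [linearIndependent_iff']
    intro s g hsum j hj
    by_contra hgj
    classical
    set t := s.filter (fun j => g j ≠ 0) with ht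
    have htne : t.Nonempty := ⟨j, Finset.mem_filter.mpr ⟨hj, hgj⟩⟩
    set j₀ := t.min' htne with hj₀
    have hj₀t : j₀ ∈ t := t.min'_mem htne
    obtain ⟨hj₀s, hgj₀⟩ := Finset.mem_filter.mp hj₀t
    have := congrFun hsum (piv j₀)
    simp only [Finset.sum_apply, Pi.smul_apply, Pi.zero_apply, smul_eq_mul] at this
    rw [Finset.sum_eq_single j₀] at this
    · have hvj : v j₀ (piv j₀) = C (piv j₀) (Fin.castLE hr j₀) := rfl
      rw [hvj] at this
      exact hgj₀ ((mul_eq_zero.mp this).resolve_right (hCpiv j₀))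
    · intro b hb hbne
      by_cases hgb : g b = 0
      · simp [hgb]
      · have hbt : b ∈ t := Finset.mem_filter.mpr ⟨hb, hgb⟩
        have : j₀ < b := lt_of_le_of_ne (t.min'_le b hbt) (Ne.symm hbne)
        have hpb : piv j₀ < piv b := hpiv this
        have hvb : v b (piv j₀) = C (piv j₀) (Fin.castLE hr b) := rfl
        rw [hvb, hCabove b (piv j₀) hpb, mul_zero]
    · intro h; exact absurd hj₀s h
  have hspan : Submodule.span K (Set.range Cᵀ) = Submodule.span K (Set.range v) := by
    apply le_antisymm
    · rw [Submodule.span_le]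
      rintro _ ⟨c, rfl⟩
      by_cases hc : (c : ℕ) < r
      · exact Submodule.subset_span ⟨⟨c, hc⟩, by simp [hv, Fin.ext_iff]⟩
      · have : Cᵀ c = 0 := funext fun i => hCzero c (le_of_not_gt hc) i
        rw [this]; exact Submodule.zero_mem _
    · exact Submodule.span_le.mpr (by rintro _ ⟨j, rfl⟩; exact Submodule.subset_span ⟨_, rfl⟩)
  rw [Matrix.rank_eq_finrank_span_cols, show Set.range C.col = Set.range Cᵀ from rfl, hspan, finrank_span_eq_card hli,
    Fintype.card_fin]
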